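/- Assume k has characteristic p > 0 and let y ∈ k be transcendental over the prime subfield 𝔽_p. Consider the points c_n = (1, yⁿ, (y+1)ⁿ) ∈ k³ for n ∈ ℕ. Then: (a) for every n ∈ ℕ, one has (y+1)ⁿ = yⁿ + 1 if and only if n = p^j for some j ∈ ℕ; consequently the nonzero homogeneous polynomial x_0 + x_1 − x_2 vanishes at c_n for infinitely many n, so the set {c_n : n ∈ ℕ} is not critically dense in P²; (b) nevertheless, for every nonzero homogeneous polynomial F ∈ k[x_0, x_1, x_2] there exists n ∈ ℕ with F(1, yⁿ, (y+1)ⁿ) ≠ 0, so the set {c_n : n ∈ ℕ} is Zariski dense in P². -/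
import Mathlib


set_option synthInstance.maxHeartbeats 1000000
set_option maxHeartbeats 4000000

noncomputable section

open Polynomial in
lemma stmt17_aux_eval_zero {k : Type*} [Field k] (p : ℕ) [Fact p.Prime] [Algebra (ZMod p) k]
    {y : k} (hy : Transcendental (ZMod p) y)
    {f : Polynomial (ZMod p)} (hf : Polynomial.aeval y f = 0) : f = 0 := by
  by_contra h; exact hy ⟨f, h, hf⟩

open Polynomial in
lemma stmt17_aux_inj {k : Type*} [Field k] (p : ℕ) [Fact p.Prime] [Algebra (ZMod p) k]
    {y : k} (hy : Transcendental (ZMod p) y)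
    {a b a' b' : ℕ} (h : y ^ a * (y + 1) ^ b = y ^ a' * (y + 1) ^ b') :
    a = a' ∧ b = b' := by
  have h0 : (Polynomial.aeval y)
      ((X : (ZMod p)[X]) ^ a * (X + 1) ^ b - X ^ a' * (X + 1) ^ b') = 0 := by
    simp [h]
  have hpoly := stmt17_aux_eval_zero p hy h0
  have heq : (X : (ZMod p)[X]) ^ a * (X + 1) ^ b = X ^ a' * (X + 1) ^ b' :=
    sub_eq_zero.mp hpoly
  have hX1 : ((X : (ZMod p)[X]) + 1) ≠ 0 := by
    intro h'
    have := congrArg (Polynomial.eval 0) h'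
    simp at this
  have hne : ∀ (u v : ℕ), ((X : (ZMod p)[X]) ^ u * (X + 1) ^ v) ≠ 0 := fun u v =>
    mul_ne_zero (pow_ne_zero _ X_ne_zero) (pow_ne_zero _ hX1)
  have hrm : ∀ (u v : ℕ), rootMultiplicity 0 ((X : (ZMod p)[X]) ^ u * (X + 1) ^ v) = u := by
    intro u v
    rw [rootMultiplicity_mul (hne u v)]
    have h1 : rootMultiplicity 0 ((X : (ZMod p)[X]) ^ u) = u := by
      have : (X : (ZMod p)[X]) ^ u = (X - C 0) ^ u := by simp
      rw [this, rootMultiplicity_X_sub_C_pow]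
    have h2 : rootMultiplicity 0 (((X : (ZMod p)[X]) + 1) ^ v) = 0 := by
      apply rootMultiplicity_eq_zero
      simp [IsRoot, one_ne_zero]
    omega
  have ha : a = a' := by
    have := hrm a b
    rw [heq, hrm a' b'] at this
    exact this.symm
  have hdeg : a + b = a' + b' := by
    have hd : ∀ (u v : ℕ), ((X : (ZMod p)[X]) ^ u * (X + 1) ^ v).natDegree = u + v := by
      intro u v
      rw [Polynomial.natDegree_mul (pow_ne_zero _ X_ne_zero) (pow_ne_zero _ hX1),
        Polynomial.natDegree_pow, Polynomial.natDegree_pow, Polynomial.natDegree_X]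
      have : ((X : (ZMod p)[X]) + 1).natDegree = 1 := by
        simpa using Polynomial.natDegree_X_add_C (1 : ZMod p)
      rw [this]; ring
    have := hd a b
    rw [heq, hd a' b'] at this
    exact this.symm
  exact ⟨ha, by omega⟩

open Polynomial in
lemma stmt17_aux_a {k : Type*} [Field k] (p : ℕ) [Fact p.Prime] [CharP k p]
    [Algebra (ZMod p) k] {y : k} (hy : Transcendental (ZMod p) y) (n : ℕ) :
    (y + 1) ^ n = y ^ n + 1 ↔ ∃ j : ℕ, n = p ^ j := by
  constructor
  · intro h
    have hn : n ≠ 0 := by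
      rintro rfl
      simp at h
    set j := n.factorization p with hj
    set q := p ^ j with hq
    set m := n / q with hm
    have hqm : q * m = n := Nat.ordProj_mul_ordCompl_eq_self n p
    have hpm : ¬ p ∣ m := Nat.not_dvd_ordCompl Fact.out hn
    have hm0 : m ≠ 0 := by
      intro h'; rw [h', mul_zero] at hqm; exact hn hqm.symm
    by_cases hm1 : m = 1
    · exact ⟨j, by rw [← hqm, hm1, mul_one]⟩
    exfalso
    have hz : Transcendental (ZMod p) (y ^ q) :=
      hy.pow (pow_pos (Nat.Prime.pos Fact.out) j)
    have e1 : (y + 1) ^ q = y ^ q + 1 := by simpa using add_pow_char_pow y 1 p j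
    have h2 : (y ^ q + 1) ^ m = (y ^ q) ^ m + 1 := by
      calc (y ^ q + 1) ^ m = ((y + 1) ^ q) ^ m := by rw [e1]
        _ = (y + 1) ^ n := by rw [← pow_mul, hqm]
        _ = y ^ n + 1 := h
        _ = (y ^ q) ^ m + 1 := by rw [← pow_mul, hqm]
    have h0 : (Polynomial.aeval (y ^ q))
        (((X : (ZMod p)[X]) + 1) ^ m - X ^ m - 1) = 0 := by
      simp [h2]
    have hpoly := stmt17_aux_eval_zero p hz h0
    have hc := congrArg (fun f => Polynomial.coeff f 1) hpoly
    simp only [Polynomial.coeff_sub, Polynomial.coeff_X_add_one_pow,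
      Polynomial.coeff_X_pow, Polynomial.coeff_one, Polynomial.coeff_zero] at hc
    rw [if_neg (by omega : ¬ (1 : ℕ) = m), if_neg (one_ne_zero)] at hc
    simp [Nat.choose_one_right] at hc
    exact hpm ((ZMod.natCast_eq_zero_iff m p).mp hc)
  · rintro ⟨j, rfl⟩
    simpa using add_pow_char_pow y 1 p j

open MvPolynomial in
lemma stmt17_aux_c {k : Type*} [Field k] (p : ℕ) [Fact p.Prime] [Algebra (ZMod p) k]
    {y : k} (hy : Transcendental (ZMod p) y)
    (F : MvPolynomial (Fin 3) k) (hF : F ≠ 0) (d : ℕ) (hd : F.IsHomogeneous d)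
    (hall : ∀ n : ℕ, MvPolynomial.eval ![1, y ^ n, (y + 1) ^ n] F = 0) : False := by
  classical
  set t : (Fin 3 →₀ ℕ) → k := fun s => y ^ s 1 * (y + 1) ^ s 2 with ht
  have hdeg : ∀ s ∈ F.support, s 0 + s 1 + s 2 = d := by
    intro s hs
    have h1 := hd (MvPolynomial.mem_support_iff.mp hs)
    simpa [Finsupp.weight_apply, Finsupp.sum_fintype, Fin.sum_univ_three] using h1
  have hinj : Function.Injective
      (fun s : {x // x ∈ F.support} => powersHom k (t s.1)) := by
    intro s s' hss
    have h1 : t s.1 = t s'.1 := by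
      have h2 := congrArg (fun f => f (Multiplicative.ofAdd 1)) hss
      simpa using h2
    obtain ⟨e1, e2⟩ := stmt17_aux_inj p hy h1
    have e0 : s.1 0 = s'.1 0 := by
      have := hdeg s.1 s.2; have := hdeg s'.1 s'.2; omega
    apply Subtype.ext
    apply Finsupp.ext
    intro i
    fin_cases i <;> assumption
  have li := (linearIndependent_monoidHom (Multiplicative ℕ) k).comp
    (fun s : {x // x ∈ F.support} => powersHom k (t s.1)) hinj
  have hprod : ∀ (n : ℕ) (s : Fin 3 →₀ ℕ),
      (∏ i, (![1, y ^ n, (y + 1) ^ n] : Fin 3 → k) i ^ s i) = t s ^ n := by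
    intro n s
    rw [Fin.prod_univ_three]
    simp only [Matrix.cons_val_zero, Matrix.cons_val_one, Matrix.head_cons,
      Matrix.cons_val_two, Matrix.tail_cons, one_pow, ht]
    rw [mul_pow, ← pow_mul, ← pow_mul, ← pow_mul, ← pow_mul,
      mul_comm n (s 1), mul_comm n (s 2), one_mul]
  have hsum : ∑ s : {x // x ∈ F.support},
      F.coeff s.1 • (⇑(powersHom k (t s.1)) : Multiplicative ℕ → k) = 0 := by
    funext w
    simp only [Finset.sum_apply, Pi.smul_apply, powersHom_apply, smul_eq_mul, Pi.zero_apply]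
    have h3 := hall (Multiplicative.toAdd w)
    rw [MvPolynomial.eval_eq'] at h3
    rw [← h3, ← Finset.sum_attach F.support
      (fun s => MvPolynomial.coeff s F * ∏ i, (![1, y ^ Multiplicative.toAdd w,
        (y + 1) ^ Multiplicative.toAdd w] : Fin 3 → k) i ^ s i)]
    exact Finset.sum_congr rfl fun s _ => by rw [hprod]
  have hzero := Fintype.linearIndependent_iff.mp li (fun s => F.coeff s.1) hsum
  obtain ⟨s, hs⟩ := MvPolynomial.support_nonempty.mpr hF
  exact (MvPolynomial.mem_support_iff.mp hs) (hzero ⟨s, hs⟩)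

/-- in characteristic `p > 0` with `y` transcendental over `𝔽_p`, for the
points `c_n = (1, yⁿ, (y+1)ⁿ)`: (a) `(y+1)ⁿ = yⁿ + 1` iff `n` is a power of `p`, so the
nonzero homogeneous polynomial `x₀ + x₁ − x₂` vanishes at infinitely many `c_n` and the
set is not critically dense; (b) nevertheless the set `{c_n}` is Zariski dense in `ℙ²`. -/
theorem stmt_17 {k : Type*} [Field k] [IsAlgClosed k]
    (p : ℕ) [Fact p.Prime] [CharP k p] [Algebra (ZMod p) k]
    (y : k) (hy : Transcendental (ZMod p) y) :
    (∀ n : ℕ, (y + 1) ^ n = y ^ n + 1 ↔ ∃ j : ℕ, n = p ^ j) ∧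
    {n : ℕ | MvPolynomial.eval (![1, y ^ n, (y + 1) ^ n])
      (MvPolynomial.X 0 + MvPolynomial.X 1 - MvPolynomial.X 2 :
        MvPolynomial (Fin 3) k) = 0}.Infinite ∧
    (∀ F : MvPolynomial (Fin 3) k, F ≠ 0 → (∃ d, F.IsHomogeneous d) →
      ∃ n : ℕ, MvPolynomial.eval ![1, y ^ n, (y + 1) ^ n] F ≠ 0) := by
  refine ⟨stmt17_aux_a p hy, ?_, ?_⟩
  · apply Set.infinite_of_injective_forall_mem
      (f := fun j : ℕ => p ^ j)
    · exact fun a b hab => Nat.pow_right_injective (Fact.out : p.Prime).two_le hab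
    · intro j
      simp only [Set.mem_setOf_eq, map_sub, map_add, MvPolynomial.eval_X,
        Matrix.cons_val_zero, Matrix.cons_val_one, Matrix.head_cons,
        Matrix.cons_val_two, Matrix.tail_cons]
      have := (stmt17_aux_a p hy (p ^ j)).mpr ⟨j, rfl⟩
      rw [this]; ring
  · intro F hF ⟨d, hd⟩
    by_contra hcon
    push_neg at hcon
    exact stmt17_aux_c p hy F hF d hd hcon
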